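/- The Macaulay pseudo-power function is monotone: for positive integers n ≤ m and any i ≥ 1, n^{<i>} ≤ m^{<i>}. -/
import Mathlib


/-- The largest `a` such that `C(a,i) ≤ n` (for `n ≥ 1`, `i ≥ 1`):
the top term of the `i`-th Macaulay representation of `n`. -/
def macaulayTop (n i : ℕ) : ℕ :=
  Nat.findGreatest (fun a => Nat.choose a i ≤ n) (n + i)

/-- The Macaulay pseudo-power `n^{<i>}`: write the `i`-th Macaulay representation
`n = C(a_i,i) + C(a_{i-1},i-1) + ⋯ + C(a_j,j)` (computed greedily) and
return `C(a_i+1,i+1) + C(a_{i-1}+1,i) + ⋯ + C(a_j+1,j+1)`; also `0^{<i>} = 0`. -/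
def pseudoPow : ℕ → ℕ → ℕ
  | _, 0 => 0
  | n, (i+1) =>
    if n = 0 then 0
    else Nat.choose (macaulayTop n (i+1) + 1) (i+2) +
      pseudoPow (n - Nat.choose (macaulayTop n (i+1)) (i+1)) i

/-- `(g 0, g 1, …, g k)` is an M-sequence: `g 0 = 1` and
`g (i+1) ≤ (g i)^{<i>}` for all `1 ≤ i < k`. -/
def IsMSequence (g : ℕ → ℕ) (k : ℕ) : Prop :=
  g 0 = 1 ∧ ∀ i, 1 ≤ i → i < k → g (i + 1) ≤ pseudoPow (g i) i

lemma choose_lb {a k : ℕ} (hk : 1 ≤ k) (hka : k ≤ a) : a + 1 - k ≤ a.choose k := by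
  obtain ⟨k, rfl⟩ : ∃ k', k = k' + 1 := ⟨k - 1, by omega⟩
  clear hk
  induction a with
  | zero => omega
  | succ a ih =>
    rcases eq_or_lt_of_le hka with h | h
    · simp [← h, Nat.choose_self]
    · have hk' : k + 1 ≤ a := by omega
      have h2 : 1 ≤ a.choose k := Nat.choose_pos (by omega)
      have h3 := ih hk'
      have h4 : (a+1).choose (k+1) = a.choose k + a.choose (k+1) := Nat.choose_succ_succ a k
      omega

lemma top_ge {n i : ℕ} (hn : 1 ≤ n) : i ≤ macaulayTop n i :=
  Nat.le_findGreatest (P := fun a => Nat.choose a i ≤ n) (by omega)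
    (by simpa [Nat.choose_self] using hn)

lemma top_spec {n i : ℕ} (hn : 1 ≤ n) : (macaulayTop n i).choose i ≤ n :=
  Nat.findGreatest_spec (P := fun a => Nat.choose a i ≤ n) (m := i) (by omega)
    (by simpa [Nat.choose_self] using hn)

lemma top_lt {n i : ℕ} (hn : 1 ≤ n) (hi : 1 ≤ i) : n < (macaulayTop n i + 1).choose i := by
  have hle : macaulayTop n i ≤ n + i := Nat.findGreatest_le _
  have hne : macaulayTop n i ≠ n + i := by
    intro h
    have h1 := top_spec (n := n) (i := i) hn
    rw [h] at h1
    have := choose_lb (a := n + i) hi (by omega)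
    omega
  by_contra h
  push_neg at h
  unfold macaulayTop at hle hne h
  exact Nat.findGreatest_is_greatest (P := fun a => Nat.choose a i ≤ n)
    (Nat.lt_succ_self _) (by omega) h

lemma top_mono {n m i : ℕ} (hn : 1 ≤ n) (hnm : n ≤ m) : macaulayTop n i ≤ macaulayTop m i :=
  Nat.le_findGreatest (P := fun a => Nat.choose a i ≤ m)
    (le_trans (Nat.findGreatest_le _) (by omega))
    (le_trans (top_spec hn) hnm)

lemma pseudoPow_zero (i : ℕ) : pseudoPow 0 i = 0 := by cases i <;> simp [pseudoPow]

lemma pseudoPow_succ {n : ℕ} (i : ℕ) (hn : n ≠ 0) :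
    pseudoPow n (i+1) = (macaulayTop n (i+1) + 1).choose (i+2) +
      pseudoPow (n - (macaulayTop n (i+1)).choose (i+1)) i := by
  rw [pseudoPow, if_neg hn]

lemma top_one {n : ℕ} : macaulayTop n 1 = n := by
  unfold macaulayTop
  rw [Nat.findGreatest_eq_iff]
  refine ⟨by omega, fun _ => by simp, fun k hk _ => by simp; omega⟩

lemma pseudoPow_one {n : ℕ} (hn : 1 ≤ n) : pseudoPow n 1 = (n+1).choose 2 := by
  rw [show (1:ℕ) = 0 + 1 from rfl, pseudoPow_succ 0 (by omega), top_one]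
  simp [pseudoPow]

lemma pseudoPow_le_choose : ∀ i, 1 ≤ i → ∀ n c, 1 ≤ n → n ≤ c.choose i →
    pseudoPow n i ≤ (c+1).choose (i+1) := by
  intro i hi
  induction i, hi using Nat.le_induction with
  | base =>
    intro n c hn hnc
    rw [pseudoPow_one hn]
    simp only [Nat.choose_one_right] at hnc
    exact Nat.choose_le_choose 2 (by omega)
  | succ i hi ih =>
    intro n c hn hnc
    show pseudoPow n (i+1) ≤ (c+1).choose (i+2)
    have hbge : i + 1 ≤ macaulayTop n (i+1) := top_ge hn
    have hbspec : (macaulayTop n (i+1)).choose (i+1) ≤ n := top_spec hn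
    have hblt : n < (macaulayTop n (i+1) + 1).choose (i+1) := top_lt hn (by omega)
    have hci : i + 1 ≤ c := by
      by_contra h
      rw [Nat.choose_eq_zero_of_lt (by omega)] at hnc
      omega
    have hbc : macaulayTop n (i+1) ≤ c := by
      by_contra h
      push_neg at h
      have h1 : (c+1).choose (i+1) ≤ (macaulayTop n (i+1)).choose (i+1) :=
        Nat.choose_le_choose _ (by omega)
      have h2 : (c+1).choose (i+1) = c.choose i + c.choose (i+1) := Nat.choose_succ_succ c i
      have h3 : 1 ≤ c.choose i := Nat.choose_pos (by omega)
      omega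
    have hpas : (macaulayTop n (i+1) + 1).choose (i+1)
        = (macaulayTop n (i+1)).choose i + (macaulayTop n (i+1)).choose (i+1) :=
      Nat.choose_succ_succ _ i
    rw [pseudoPow_succ i (by omega)]
    have hn'lt : n - (macaulayTop n (i+1)).choose (i+1) < (macaulayTop n (i+1)).choose i := by
      omega
    rcases Nat.eq_zero_or_pos (n - (macaulayTop n (i+1)).choose (i+1)) with h0 | h0
    · rw [h0, pseudoPow_zero]
      have := Nat.choose_le_choose (i+2) (show macaulayTop n (i+1) + 1 ≤ c + 1 by omega)
      omega
    · have hbc' : macaulayTop n (i+1) < c := by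
        rcases eq_or_lt_of_le hbc with h | h
        · exfalso
          rw [← h] at hnc
          omega
        · exact h
      have h1 : pseudoPow (n - (macaulayTop n (i+1)).choose (i+1)) i
          ≤ (macaulayTop n (i+1) + 1).choose (i+1) :=
        ih _ (macaulayTop n (i+1)) h0 (by omega)
      have h2 : (macaulayTop n (i+1) + 2).choose (i+2)
          = (macaulayTop n (i+1) + 1).choose (i+1) + (macaulayTop n (i+1) + 1).choose (i+2) :=
        Nat.choose_succ_succ _ (i+1)
      have h3 := Nat.choose_le_choose (i+2) (show macaulayTop n (i+1) + 2 ≤ c + 1 by omega)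
      omega

theorem pseudoPow_monotone' : ∀ i, 1 ≤ i → ∀ n m, 1 ≤ n → n ≤ m →
    pseudoPow n i ≤ pseudoPow m i := by
  intro i hi
  induction i, hi using Nat.le_induction with
  | base =>
    intro n m hn hnm
    rw [pseudoPow_one hn, pseudoPow_one (by omega)]
    exact Nat.choose_le_choose 2 (by omega)
  | succ i hi ih =>
    intro n m hn hnm
    have hm : 1 ≤ m := by omega
    have hba : macaulayTop n (i+1) ≤ macaulayTop m (i+1) := top_mono hn hnm
    have hmspec : (macaulayTop m (i+1)).choose (i+1) ≤ m := top_spec hm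
    rw [pseudoPow_succ i (show m ≠ 0 by omega)]
    rcases eq_or_lt_of_le hba with h | h
    · rw [pseudoPow_succ i (show n ≠ 0 by omega), h]
      have hle : n - (macaulayTop m (i+1)).choose (i+1)
          ≤ m - (macaulayTop m (i+1)).choose (i+1) := by omega
      rcases Nat.eq_zero_or_pos (n - (macaulayTop m (i+1)).choose (i+1)) with h0 | h0
      · rw [h0, pseudoPow_zero]; omega
      · have := ih _ _ h0 hle
        omega
    · have hnlt : n < (macaulayTop n (i+1) + 1).choose (i+1) := top_lt hn (by omega)
      have h1 : (macaulayTop n (i+1) + 1).choose (i+1) ≤ (macaulayTop m (i+1)).choose (i+1) :=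
        Nat.choose_le_choose _ (by omega)
      have h2 : pseudoPow n (i+1) ≤ (macaulayTop m (i+1) + 1).choose (i+2) :=
        pseudoPow_le_choose (i+1) (by omega) n (macaulayTop m (i+1)) hn (by omega)
      omega

/-- the Macaulay pseudo-power is monotone: for positive integers
`n ≤ m` and any `i ≥ 1`, `n^{<i>} ≤ m^{<i>}`. -/
theorem pseudoPow_monotone (n m i : ℕ) (hn : 1 ≤ n) (hnm : n ≤ m) (hi : 1 ≤ i) :
    pseudoPow n i ≤ pseudoPow m i :=
  pseudoPow_monotone' i hi n m hn hnm
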